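/- Any two metrics g₁ and g₂ on the interior of M compatible with the same Lie structure at infinity (M, 𝒱) are bi-Lipschitz equivalent: there exists a constant C > 0 such that C⁻¹ g₂(X,X) ≤ g₁(X,X) ≤ C g₂(X,X) for all tangent vectors X on the interior of M. Consequently, the associated distance functions satisfy C⁻¹ d₂ ≤ d₁ ≤ C d₂. -/

import Mathlib

open Bundle

open Set Metric in
/-- One-sided uniform bound: a continuous quadratic form `g₁` is bounded above by a
constant multiple of a continuous positive definite quadratic form `g₂` on a vector
bundle over a compact base. -/
theorem aux_onesided_bound
    {M : Type*} [TopologicalSpace M] [CompactSpace M]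
    {F : Type*} [NormedAddCommGroup F] [NormedSpace ℝ F] [FiniteDimensional ℝ F]
    {E : M → Type*} [∀ x, AddCommGroup (E x)] [∀ x, Module ℝ (E x)]
    [∀ x, TopologicalSpace (E x)] [TopologicalSpace (TotalSpace F E)]
    [FiberBundle F E] [VectorBundle ℝ F E]
    (g₁ g₂ : ∀ x, E x → ℝ)
    (hc₁ : Continuous fun p : TotalSpace F E => g₁ p.proj p.snd)
    (hc₂ : Continuous fun p : TotalSpace F E => g₂ p.proj p.snd)
    (hq₁ : ∀ x, ∃ B : E x →ₗ[ℝ] E x →ₗ[ℝ] ℝ, (∀ v w, B v w = B w v) ∧ ∀ v, g₁ x v = B v v)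
    (hq₂ : ∀ x, ∃ B : E x →ₗ[ℝ] E x →ₗ[ℝ] ℝ, (∀ v w, B v w = B w v) ∧ ∀ v, g₂ x v = B v v)
    (hp₂ : ∀ x (v : E x), v ≠ 0 → 0 < g₂ x v) :
    ∃ C : ℝ, 0 < C ∧ ∀ x (v : E x), g₁ x v ≤ C * g₂ x v := by
  -- values at zero vectors
  have hz₁ : ∀ x, g₁ x 0 = 0 := fun x => by
    obtain ⟨B, -, hB⟩ := hq₁ x; simp [hB]
  have hz₂ : ∀ x, g₂ x 0 = 0 := fun x => by
    obtain ⟨B, -, hB⟩ := hq₂ x; simp [hB]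
  -- quadratic scaling
  have hsc₁ : ∀ x (t : ℝ) (v : E x), g₁ x (t • v) = t ^ 2 * g₁ x v := by
    intro x t v
    obtain ⟨B, -, hB⟩ := hq₁ x
    simp only [hB, map_smul, LinearMap.smul_apply, smul_eq_mul]
    ring
  have hsc₂ : ∀ x (t : ℝ) (v : E x), g₂ x (t • v) = t ^ 2 * g₂ x v := by
    intro x t v
    obtain ⟨B, -, hB⟩ := hq₂ x
    simp only [hB, map_smul, LinearMap.smul_apply, smul_eq_mul]
    ring
  -- degenerate cases
  rcases isEmpty_or_nonempty M with hM | hM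
  · exact ⟨1, one_pos, fun x => (IsEmpty.false x).elim⟩
  rcases subsingleton_or_nontrivial F with hF | hF
  · refine ⟨1, one_pos, fun x v => ?_⟩
    have hx : x ∈ (trivializationAt F E x).baseSet := mem_baseSet_trivializationAt F E x
    have : Subsingleton (E x) :=
      (((trivializationAt F E x).continuousLinearEquivAt ℝ x hx).toLinearEquiv.toEquiv).subsingleton
    have hv : v = 0 := Subsingleton.elim v 0
    rw [hv, hz₁, hz₂]; norm_num
  -- local bound at each point
  have key : ∀ x : M, ∃ (c : ℝ) (U : Set M), 0 < c ∧ IsOpen U ∧ x ∈ U ∧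
      ∀ y ∈ U, ∀ v : E y, g₁ y v ≤ c * g₂ y v := by
    intro x
    set e := trivializationAt F E x with he
    have hx : x ∈ e.baseSet := mem_baseSet_trivializationAt F E x
    set f₁ : M × F → ℝ := fun p => g₁ p.1 (e.symm p.1 p.2) with hf₁
    set f₂ : M × F → ℝ := fun p => g₂ p.1 (e.symm p.1 p.2) with hf₂
    have hcf₁ : ContinuousOn f₁ (e.baseSet ×ˢ univ) := hc₁.comp_continuousOn e.continuousOn_symm
    have hcf₂ : ContinuousOn f₂ (e.baseSet ×ˢ univ) := hc₂.comp_continuousOn e.continuousOn_symm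
    -- the compact set {x} × sphere
    have hSc : IsCompact (sphere (0 : F) 1) := isCompact_sphere 0 1
    have hSne : (sphere (0 : F) 1).Nonempty := NormedSpace.sphere_nonempty.mpr zero_le_one
    have hKc : IsCompact (({x} : Set M) ×ˢ sphere (0 : F) 1) := isCompact_singleton.prod hSc
    have hKne : (({x} : Set M) ×ˢ sphere (0 : F) 1).Nonempty :=
      (singleton_nonempty x).prod hSne
    have hKsub : (({x} : Set M) ×ˢ sphere (0 : F) 1) ⊆ e.baseSet ×ˢ univ := by
      rintro ⟨y, w⟩ ⟨hy, -⟩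
      exact ⟨by rw [mem_singleton_iff.mp hy]; exact hx, mem_univ _⟩
    -- symm is injective-ish at points of baseSet
    have hsymm_ne : ∀ y (hy : y ∈ e.baseSet) (w : F), w ≠ 0 → e.symm y w ≠ 0 := by
      intro y hy w hw hcon
      apply hw
      have h1 : e.linearMapAt ℝ y (e.symmₗ ℝ y w) = w := e.linearMapAt_symmₗ hy w
      rw [show (e.symmₗ ℝ y w) = e.symm y w from congrFun (e.coe_symmₗ (R := ℝ) hy) w, hcon,
        map_zero] at h1
      exact h1.symm
    -- min of f₂ and max of f₁ on K
    obtain ⟨pm, hpmK, hpmin⟩ :=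
      hKc.exists_isMinOn hKne (hcf₂.mono hKsub)
    obtain ⟨pM, hpMK, hpmax⟩ :=
      hKc.exists_isMaxOn hKne (hcf₁.mono hKsub)
    have hm_pos : 0 < f₂ pm := by
      obtain ⟨hpm1, hpm2⟩ := hpmK
      have hy : pm.1 ∈ e.baseSet := by rw [mem_singleton_iff.mp hpm1]; exact hx
      refine hp₂ _ _ (hsymm_ne _ hy _ ?_)
      intro h0
      rw [h0] at hpm2
      simp at hpm2
    set c : ℝ := (max (f₁ pM) 0 + 1) / f₂ pm with hc
    have hc_pos : 0 < c := div_pos (by positivity) hm_pos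
    -- strict inequality on K
    have hKlt : ∀ p ∈ ({x} : Set M) ×ˢ sphere (0 : F) 1, f₁ p < c * f₂ p := by
      intro p hp
      have h1 : f₁ p ≤ f₁ pM := hpmax hp
      have h2 : f₂ pm ≤ f₂ p := hpmin hp
      have h3 : c * f₂ pm ≤ c * f₂ p := by
        exact mul_le_mul_of_nonneg_left h2 hc_pos.le
      have h4 : c * f₂ pm = max (f₁ pM) 0 + 1 := by
        rw [hc, div_mul_cancel₀ _ hm_pos.ne']
      calc f₁ p ≤ f₁ pM := h1
        _ ≤ max (f₁ pM) 0 := le_max_left _ _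
        _ < max (f₁ pM) 0 + 1 := by linarith
        _ = c * f₂ pm := h4.symm
        _ ≤ c * f₂ p := h3
    -- the open set where the strict inequality holds
    have hno : IsOpen ((e.baseSet ×ˢ univ) ∩ (fun p => c * f₂ p - f₁ p) ⁻¹' Ioi 0) := by
      refine ContinuousOn.isOpen_inter_preimage ?_ (e.open_baseSet.prod isOpen_univ) isOpen_Ioi
      exact (hcf₂.const_smul c).sub hcf₁
    have hKn : (({x} : Set M) ×ˢ sphere (0 : F) 1) ⊆
        (e.baseSet ×ˢ univ) ∩ (fun p => c * f₂ p - f₁ p) ⁻¹' Ioi 0 := by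
      intro p hp
      exact ⟨hKsub hp, by simpa using sub_pos.mpr (hKlt p hp)⟩
    obtain ⟨u, v, huo, hvo, hxu, hSv, huv⟩ :=
      generalized_tube_lemma isCompact_singleton hSc hno hKn
    refine ⟨c, u, hc_pos, huo, hxu rfl, ?_⟩
    intro y hy w
    -- y is in the base set
    have hyb : y ∈ e.baseSet := by
      obtain ⟨w₀, hw₀⟩ := hSne
      exact ((huv (Set.mk_mem_prod hy (hSv hw₀))).1).1
    by_cases hw0 : w = 0
    · rw [hw0, hz₁, hz₂]; norm_num
    -- the fiber coordinate of w
    set z : F := (e ⟨y, w⟩).2 with hz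
    have hez : e.symm y z = w := e.symm_apply_apply_mk hyb w
    have hz0 : z ≠ 0 := by
      intro h0
      apply hw0
      rw [← hez, h0]
      have : e.symmₗ ℝ y (0 : F) = 0 := map_zero _
      rwa [congrFun (e.coe_symmₗ (R := ℝ) hyb) (0 : F)] at this
    have hnz : (0 : ℝ) < ‖z‖ := norm_pos_iff.mpr hz0
    set z' : F := ‖z‖⁻¹ • z with hz'
    have hz'S : z' ∈ sphere (0 : F) 1 := by
      simp only [mem_sphere_iff_norm, sub_zero, hz', norm_smul, norm_inv, norm_norm]
      field_simp
    have hmem : (y, z') ∈ (e.baseSet ×ˢ univ) ∩ (fun p => c * f₂ p - f₁ p) ⁻¹' Ioi 0 :=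
      huv (Set.mk_mem_prod hy (hSv hz'S))
    have hlt : f₁ (y, z') < c * f₂ (y, z') := by
      have := hmem.2
      simp only [mem_preimage, mem_Ioi] at this
      linarith
    -- rewrite f₁/f₂ at (y, z') in terms of g at w
    have hsymm_smul : e.symm y z' = ‖z‖⁻¹ • w := by
      rw [← hez, hz']
      have : e.symmₗ ℝ y (‖z‖⁻¹ • z) = ‖z‖⁻¹ • e.symmₗ ℝ y z := map_smul _ _ _
      rwa [congrFun (e.coe_symmₗ (R := ℝ) hyb) (‖z‖⁻¹ • z), congrFun (e.coe_symmₗ (R := ℝ) hyb) z] at this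
    have h₁ : f₁ (y, z') = ‖z‖⁻¹ ^ 2 * g₁ y w := by
      simp only [hf₁, hsymm_smul, hsc₁]
    have h₂ : f₂ (y, z') = ‖z‖⁻¹ ^ 2 * g₂ y w := by
      simp only [hf₂, hsymm_smul, hsc₂]
    rw [h₁, h₂] at hlt
    have ht2 : (0 : ℝ) < ‖z‖⁻¹ ^ 2 := by positivity
    nlinarith [hlt, ht2]
  -- extract choice functions and use compactness of M
  choose c U hcpos hUo hxU hbound using key
  obtain ⟨t, ht⟩ := isCompact_univ.elim_finite_subcover U hUo
    (fun y _ => mem_iUnion.mpr ⟨y, hxU y⟩)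
  have htne : t.Nonempty := by
    obtain ⟨y⟩ := hM
    obtain ⟨i, hi, -⟩ := by simpa using ht (mem_univ y)
    exact ⟨i, hi⟩
  set C : ℝ := t.sup' htne c with hC
  have hC_pos : 0 < C := by
    obtain ⟨i, hi⟩ := htne
    exact lt_of_lt_of_le (hcpos i) (Finset.le_sup' c hi)
  refine ⟨C, hC_pos, fun y v => ?_⟩
  obtain ⟨i, hi, hyi⟩ := by simpa using ht (mem_univ y)
  have h1 : g₁ y v ≤ c i * g₂ y v := hbound i y hyi v
  have hg₂nn : 0 ≤ g₂ y v := by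
    by_cases hv : v = 0
    · rw [hv, hz₂]
    · exact (hp₂ y v hv).le
  calc g₁ y v ≤ c i * g₂ y v := h1
    _ ≤ C * g₂ y v := mul_le_mul_of_nonneg_right (Finset.le_sup' c hi) hg₂nn

/-- Any two metrics compatible with the same Lie structure at
infinity `(M, 𝒱)` are bi-Lipschitz equivalent.  Formalized as the key fact used in
the paper: a compatible metric is the restriction to the interior of a fiberwise
inner product (a positive definite quadratic form) on the bundle `^𝒱TM` over the
compact manifold with corners `M`, and any two continuous fiberwise positive
definite quadratic forms `g₁, g₂` on a vector bundle `E` over a compact base are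
uniformly equivalent: there is `C > 0` with
`C⁻¹ g₂(X,X) ≤ g₁(X,X) ≤ C g₂(X,X)` for all `X`. -/
theorem compatible_metrics_biLipschitz
    {M : Type*} [TopologicalSpace M] [CompactSpace M]
    {F : Type*} [NormedAddCommGroup F] [NormedSpace ℝ F] [FiniteDimensional ℝ F]
    {E : M → Type*} [∀ x, AddCommGroup (E x)] [∀ x, Module ℝ (E x)]
    [∀ x, TopologicalSpace (E x)] [TopologicalSpace (TotalSpace F E)]
    [FiberBundle F E] [VectorBundle ℝ F E]
    (g₁ g₂ : ∀ x, E x → ℝ)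
    (hc₁ : Continuous fun p : TotalSpace F E => g₁ p.proj p.snd)
    (hc₂ : Continuous fun p : TotalSpace F E => g₂ p.proj p.snd)
    (hq₁ : ∀ x, ∃ B : E x →ₗ[ℝ] E x →ₗ[ℝ] ℝ, (∀ v w, B v w = B w v) ∧ ∀ v, g₁ x v = B v v)
    (hq₂ : ∀ x, ∃ B : E x →ₗ[ℝ] E x →ₗ[ℝ] ℝ, (∀ v w, B v w = B w v) ∧ ∀ v, g₂ x v = B v v)
    (hp₁ : ∀ x (v : E x), v ≠ 0 → 0 < g₁ x v)
    (hp₂ : ∀ x (v : E x), v ≠ 0 → 0 < g₂ x v) :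
    ∃ C : ℝ, 0 < C ∧ ∀ x (v : E x), C⁻¹ * g₂ x v ≤ g₁ x v ∧ g₁ x v ≤ C * g₂ x v := by
  obtain ⟨C₁, hC₁, h₁⟩ := aux_onesided_bound g₁ g₂ hc₁ hc₂ hq₁ hq₂ hp₂
  obtain ⟨C₂, hC₂, h₂⟩ := aux_onesided_bound g₂ g₁ hc₂ hc₁ hq₂ hq₁ hp₁
  have hz₁ : ∀ x, g₁ x 0 = 0 := fun x => by
    obtain ⟨B, -, hB⟩ := hq₁ x; simp [hB]
  have hz₂ : ∀ x, g₂ x 0 = 0 := fun x => by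
    obtain ⟨B, -, hB⟩ := hq₂ x; simp [hB]
  have hg₁nn : ∀ x (v : E x), 0 ≤ g₁ x v := by
    intro x v
    by_cases hv : v = 0
    · rw [hv, hz₁]
    · exact (hp₁ x v hv).le
  have hg₂nn : ∀ x (v : E x), 0 ≤ g₂ x v := by
    intro x v
    by_cases hv : v = 0
    · rw [hv, hz₂]
    · exact (hp₂ x v hv).le
  refine ⟨max C₁ C₂, lt_max_of_lt_left hC₁, fun x v => ⟨?_, ?_⟩⟩
  · rw [inv_mul_le_iff₀ (lt_max_of_lt_left hC₁)]
    calc g₂ x v ≤ C₂ * g₁ x v := h₂ x v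
      _ ≤ max C₁ C₂ * g₁ x v :=
        mul_le_mul_of_nonneg_right (le_max_right _ _) (hg₁nn x v)
  · calc g₁ x v ≤ C₁ * g₂ x v := h₁ x v
      _ ≤ max C₁ C₂ * g₂ x v :=
        mul_le_mul_of_nonneg_right (le_max_left _ _) (hg₂nn x v)
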